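/- Let θ := π/8 and set [m] := sin(mθ)/sin θ for m ∈ ℤ. Let M be the real 4×4 matrix with entries M₁₁ = M₃₃ = [3]/[4] + 1/([4]·√[3]), M₂₂ = M₄₄ = [3]/[4] − 1/([4]·√[3]), M₁₂ = M₂₁ = −1/√([2][4]), M₃₄ = M₄₃ = 1/√([2][4]), M₁₄ = M₄₁ = M₂₃ = M₃₂ = −√[4]/√([2][3]), and M₁₃ = M₃₁ = M₂₄ = M₄₂ = 0, where √ is the real square root. Then M is symmetric and M·M = [2]·M. -/

import Mathlib

/-- Trigonometric quantum integer `[m] = sin(m·π/8)/sin(π/8)`,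
i.e. `[m]_q` at `q = e^{2πi/16}`. -/
noncomputable def qi8 (m : ℤ) : ℝ :=
  Real.sin (m * (Real.pi / 8)) / Real.sin (Real.pi / 8)

/-- The 4×4 block U^5_{6} of the level-4 conformal-inclusion cell system. -/
noncomputable def U56 : Matrix (Fin 4) (Fin 4) ℝ :=
  !![qi8 3 / qi8 4 + 1 / (qi8 4 * Real.sqrt (qi8 3)),
       -(1 / Real.sqrt (qi8 2 * qi8 4)), 0,
       -(Real.sqrt (qi8 4) / Real.sqrt (qi8 2 * qi8 3));
     -(1 / Real.sqrt (qi8 2 * qi8 4)),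
       qi8 3 / qi8 4 - 1 / (qi8 4 * Real.sqrt (qi8 3)),
       -(Real.sqrt (qi8 4) / Real.sqrt (qi8 2 * qi8 3)), 0;
     0, -(Real.sqrt (qi8 4) / Real.sqrt (qi8 2 * qi8 3)),
       qi8 3 / qi8 4 + 1 / (qi8 4 * Real.sqrt (qi8 3)),
       1 / Real.sqrt (qi8 2 * qi8 4);
     -(Real.sqrt (qi8 4) / Real.sqrt (qi8 2 * qi8 3)), 0,
       1 / Real.sqrt (qi8 2 * qi8 4),
       qi8 3 / qi8 4 - 1 / (qi8 4 * Real.sqrt (qi8 3))]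

open Real

lemma s8_pos : 0 < Real.sin (Real.pi / 8) := by
  apply Real.sin_pos_of_pos_of_lt_pi
  · positivity
  · nlinarith [Real.pi_pos]

lemma c8_pos : 0 < Real.cos (Real.pi / 8) := by
  apply Real.cos_pos_of_mem_Ioo
  constructor <;> nlinarith [Real.pi_pos]

lemma qi8_two : qi8 2 = 2 * Real.cos (Real.pi / 8) := by
  have h : ((2:ℤ) : ℝ) * (Real.pi / 8) = 2 * (Real.pi / 8) := by push_cast; ring
  rw [qi8, h, Real.sin_two_mul,
    show 2 * Real.sin (Real.pi/8) * Real.cos (Real.pi/8)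
       = 2 * Real.cos (Real.pi/8) * Real.sin (Real.pi/8) from by ring,
    mul_div_assoc, div_self s8_pos.ne', mul_one]

lemma qi8_three : qi8 3 = Real.cos (Real.pi / 8) / Real.sin (Real.pi / 8) := by
  have h : ((3:ℤ) : ℝ) * (Real.pi / 8) = Real.pi / 2 - Real.pi / 8 := by push_cast; ring
  rw [qi8, h, Real.sin_pi_div_two_sub]

lemma qi8_four : qi8 4 = 1 / Real.sin (Real.pi / 8) := by
  have h : ((4:ℤ) : ℝ) * (Real.pi / 8) = Real.pi / 2 := by push_cast; ring
  rw [qi8, h, Real.sin_pi_div_two]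

lemma sc8 : Real.sin (Real.pi / 8) * Real.cos (Real.pi / 8) = Real.sqrt 2 / 4 := by
  have h : Real.pi / 4 = 2 * (Real.pi / 8) := by ring
  have := Real.sin_pi_div_four
  rw [h, Real.sin_two_mul] at this
  linarith

lemma s8_sq : Real.sin (Real.pi / 8) ^ 2 = (2 - Real.sqrt 2) / 4 := by
  rw [Real.sin_pi_div_eight]
  rw [div_pow, sq_sqrt (by nlinarith [Real.sq_sqrt (by norm_num : (2:ℝ) ≥ 0), Real.sqrt_nonneg 2])]
  ring

lemma c8_sq : Real.cos (Real.pi / 8) ^ 2 = (2 + Real.sqrt 2) / 4 := by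
  rw [Real.cos_pi_div_eight]
  rw [div_pow, sq_sqrt (by positivity)]
  ring

set_option maxHeartbeats 2000000 in
/-- The 4×4 block U^5_6 is symmetric and satisfies the Hecke relation. -/
theorem level4_fourByFour_symm_hecke_block :
    U56.IsSymm ∧ U56 * U56 = qi8 2 • U56 := by
  have hs := s8_pos
  have hc := c8_pos
  constructor
  · show U56.transpose = U56
    ext i j
    fin_cases i <;> fin_cases j <;> simp [U56]
  · have hr2 : Real.sqrt 2 ^ 2 = 2 := Real.sq_sqrt (by norm_num)
    have hr0 : (0:ℝ) < Real.sqrt 2 := Real.sqrt_pos.2 (by norm_num)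
    have hu2 : Real.sqrt (Real.sin (Real.pi/8)) ^ 2 = Real.sin (Real.pi/8) :=
      Real.sq_sqrt hs.le
    have hv2 : Real.sqrt (Real.cos (Real.pi/8)) ^ 2 = Real.cos (Real.pi/8) :=
      Real.sq_sqrt hc.le
    have hu0 : (0:ℝ) < Real.sqrt (Real.sin (Real.pi/8)) := Real.sqrt_pos.2 hs
    have hv0 : (0:ℝ) < Real.sqrt (Real.cos (Real.pi/8)) := Real.sqrt_pos.2 hc
    have h3 : Real.sqrt (qi8 3)
        = Real.sqrt (Real.cos (Real.pi/8)) / Real.sqrt (Real.sin (Real.pi/8)) := by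
      rw [show qi8 3 = (Real.sqrt (Real.cos (Real.pi/8)) / Real.sqrt (Real.sin (Real.pi/8)))^2 by
        rw [qi8_three, div_pow, hu2, hv2]]
      exact Real.sqrt_sq (by positivity)
    have h24 : Real.sqrt (qi8 2 * qi8 4)
        = Real.sqrt 2 * Real.sqrt (Real.cos (Real.pi/8)) / Real.sqrt (Real.sin (Real.pi/8)) := by
      rw [show qi8 2 * qi8 4
          = (Real.sqrt 2 * Real.sqrt (Real.cos (Real.pi/8)) / Real.sqrt (Real.sin (Real.pi/8)))^2 by
        rw [qi8_two, qi8_four, div_pow, mul_pow, hu2, hv2, hr2]; ring]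
      exact Real.sqrt_sq (by positivity)
    have h4 : Real.sqrt (qi8 4) = 1 / Real.sqrt (Real.sin (Real.pi/8)) := by
      rw [show qi8 4 = (1 / Real.sqrt (Real.sin (Real.pi/8)))^2 by
        rw [qi8_four, div_pow, hu2, one_pow]]
      exact Real.sqrt_sq (by positivity)
    have h23 : Real.sqrt (qi8 2 * qi8 3)
        = Real.sqrt 2 * Real.cos (Real.pi/8) / Real.sqrt (Real.sin (Real.pi/8)) := by
      rw [show qi8 2 * qi8 3
          = (Real.sqrt 2 * Real.cos (Real.pi/8) / Real.sqrt (Real.sin (Real.pi/8)))^2 by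
        rw [qi8_two, qi8_three, div_pow, mul_pow, hu2, hr2]; ring]
      exact Real.sqrt_sq (by positivity)
    have hkey : 2 * Real.cos (Real.pi/8) * Real.sin (Real.pi/8)^3
        + Real.cos (Real.pi/8) * Real.sin (Real.pi/8) + 1 = 2 * Real.cos (Real.pi/8)^4 := by
      linear_combination (2*Real.sin (Real.pi/8)^2 + 1) * sc8 + (Real.sqrt 2/2) * s8_sq
        - 2*(Real.cos (Real.pi/8)^2 + (2+Real.sqrt 2)/4) * c8_sq - (1/4)*hr2
    ext i j
    fin_cases i <;> fin_cases j <;>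
      simp [U56, Matrix.mul_apply, Fin.sum_univ_four, h3, h24, h4, h23, -Real.sin_pi_div_eight, -Real.cos_pi_div_eight] <;>
      (try simp only [qi8_two, qi8_three, qi8_four])
    all_goals (
      set S := Real.sin (Real.pi / 8) with hSdef
      set C := Real.cos (Real.pi / 8) with hCdef
      set U := Real.sqrt S with hUdef
      set V := Real.sqrt C with hVdef
      set R := Real.sqrt 2 with hRdef
      field_simp
      try ring
      try linear_combination (R^4*C^2*V^3*S^2 + R^2*C^2*V^3) * hu2
        + (C^2*V^3*S^3*(R^2+2) + C^2*V^3*S + V^5 - C^4*V^5*(R^2+2)) * hr2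
        + 2*V^3*(1-2*C^4) * hv2 + 2*V^3*C * hkey
      try linear_combination (C^2*S^2*R^2 + C^2) * hu2 + (1 - C^4*R^2) * hv2
        + (C^2*S^3 - C^5) * hr2 + C * hkey)
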